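/- Let m ≥ 1, let L : Fin m → Set ℝ assign to each index a closed interval with nonempty interior, and let σ, τ be permutations of Fin m. Suppose that L (σ i) = L i for all i, and that for all i, j such that the interiors of L i and L j intersect, one has τ⁻¹ i < τ⁻¹ j if and only if τ⁻¹ (σ i) < τ⁻¹ (σ j). Then σ is the identity permutation. (This expresses that the symmetric group acts freely on the space of overlapping intervals.) -/

import Mathlib

/-- The symmetric group acts freely on the space of overlapping intervals:
if each interval `L i` is a closed interval with nonempty interior, `L (σ i) = L i`
for all `i`, and for every pair of intervals with intersecting interiors the
permutations `τ` and `τ ∘ σ` induce the same relative order, then `σ = 1`. -/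
theorem overlapping_intervals_free_action
    (m : ℕ) (hm : 1 ≤ m) (L : Fin m → Set ℝ)
    (hL : ∀ i, ∃ a b : ℝ, a < b ∧ L i = Set.Icc a b)
    (σ τ : Equiv.Perm (Fin m))
    (hfix : ∀ i, L (σ i) = L i)
    (hord : ∀ i j : Fin m, (interior (L i) ∩ interior (L j)).Nonempty →
      (τ⁻¹ i < τ⁻¹ j ↔ τ⁻¹ (σ i) < τ⁻¹ (σ j))) :
    σ = 1 := by
  have hover : ∀ i j : Fin m, L i = L j →
      (interior (L i) ∩ interior (L j)).Nonempty := by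
    intro i j hij
    obtain ⟨a, b, hab, hI⟩ := hL i
    rw [← hij, Set.inter_self, hI, interior_Icc]
    exact Set.nonempty_Ioo.2 hab
  have key : ∀ n : ℕ, ∀ j : Fin m, (τ⁻¹ j : ℕ) = n → σ j = j := by
    intro n
    induction n using Nat.strong_induction_on with
    | _ n IH =>
      intro j hj
      rcases lt_trichotomy (τ⁻¹ (σ j)) (τ⁻¹ j) with h | h | h
      · -- then σ (σ j) = σ j by IH, so σ j = j, contradicting h
        have h1 : σ (σ j) = σ j := IH _ (hj ▸ h) (σ j) rfl
        have h2 : σ j = j := σ.injective h1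
        rw [h2] at h
        exact absurd h (lt_irrefl _)
      · exact τ⁻¹.injective h
      · -- consider σ⁻¹ j
        have hLj : L (σ⁻¹ j) = L j := by
          conv_rhs => rw [← σ.apply_symm_apply j]
          exact (hfix (σ⁻¹ j)).symm
        have h3 := (hord (σ⁻¹ j) j (hover _ _ hLj)).2
        rw [show σ (σ⁻¹ j) = j from σ.apply_symm_apply j] at h3
        have h4 : τ⁻¹ (σ⁻¹ j) < τ⁻¹ j := h3 h
        have h5 : σ (σ⁻¹ j) = σ⁻¹ j := IH _ (hj ▸ h4) (σ⁻¹ j) rfl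
        have h6 : j = σ⁻¹ j := by rw [← h5]; exact (σ.apply_symm_apply j).symm
        have h7 : σ j = j := by
          conv_lhs => rw [h6]
          exact σ.apply_symm_apply j
        rw [h7] at h
        exact absurd h (lt_irrefl _)
  exact Equiv.ext fun j => (key _ j rfl).trans (Equiv.Perm.one_apply j).symm
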